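/- Let G be a graph admitting a tree decomposition (T,X) of width less than w, adhesion at most h, and adhesion degree at most a ≥ 2. Then for every integer p with |V(G)| > p, there exists a separation (A,B) of G of order at most h such that p < |A| ≤ w + p·a. -/

import Mathlib

/-- `(tG, bag)` is a tree decomposition of `G`: `tG` is a tree, bags cover all vertices
and edges, and for every vertex the set of nodes whose bag contains it is connected in `tG`
(expressed via a walk all of whose vertices' bags contain it). -/
def IsTreeDecomp {V T : Type*} (G : SimpleGraph V) (tG : SimpleGraph T)
    (bag : T → Set V) : Prop :=
  tG.IsTree ∧
  (∀ v, ∃ t, v ∈ bag t) ∧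
  (∀ u v, G.Adj u v → ∃ t, u ∈ bag t ∧ v ∈ bag t) ∧
  (∀ v t₁ t₂, v ∈ bag t₁ → v ∈ bag t₂ →
    ∃ p : tG.Walk t₁ t₂, ∀ t ∈ p.support, v ∈ bag t)

/-- `(A, B)` is a separation of `G`: `A ∪ B = V(G)` and there is no edge between
`A ∖ B` and `B ∖ A`. -/
def IsSeparation {V : Type*} (G : SimpleGraph V) (A B : Set V) : Prop :=
  A ∪ B = Set.univ ∧ ∀ u v, G.Adj u v → ¬(u ∈ A \ B ∧ v ∈ B \ A)

open SimpleGraph Set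

set_option linter.unusedSectionVars false

namespace TDSep

variable {V T : Type*} [Fintype V] [Fintype T] {tG : SimpleGraph T} {bag : T → Set V}

def D (tG : SimpleGraph T) (t t' : T) : Set T :=
  {u | (tG.deleteEdges {s(t, t')}).Reachable t' u}

def VS (tG : SimpleGraph T) (bag : T → Set V) (t t' : T) : Set V :=
  {v | ∃ u ∈ D tG t t', v ∈ bag u}

lemma mem_D_self (t t' : T) : t' ∈ D tG t t' := Reachable.refl _

lemma not_mem_D (hac : tG.IsAcyclic) {t t' : T} (h : tG.Adj t t') : t ∉ D tG t t' := by
  have hb := isAcyclic_iff_forall_adj_isBridge.mp hac h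
  rw [isBridge_iff] at hb
  intro hr
  exact hb hr.symm

lemma edge_mem_of_crossing {t t' x y : T} (w : tG.Walk x y)
    (hx : x ∈ D tG t t') (hy : y ∉ D tG t t') : s(t, t') ∈ w.edges := by
  by_contra he
  have hw : ∀ e ∈ w.edges, e ∉ ({s(t, t')} : Set (Sym2 T)) := by
    intro e hew hmem
    rw [Set.mem_singleton_iff] at hmem
    exact he (hmem ▸ hew)
  exact hy (hx.trans ⟨w.toDeleteEdges _ hw⟩)

lemma crossing_support {t t' x y : T} (w : tG.Walk x y)
    (hx : x ∈ D tG t t') (hy : y ∉ D tG t t') : t ∈ w.support ∧ t' ∈ w.support :=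
  ⟨w.fst_mem_support_of_mem_edges (edge_mem_of_crossing w hx hy),
   w.snd_mem_support_of_mem_edges (edge_mem_of_crossing w hx hy)⟩

lemma mem_adh
    (hconn : ∀ v t₁ t₂, v ∈ bag t₁ → v ∈ bag t₂ →
      ∃ p : tG.Walk t₁ t₂, ∀ s ∈ p.support, v ∈ bag s)
    {t t' : T} {v : V} (hv : v ∈ VS tG bag t t') {u : T} (hu : u ∉ D tG t t')
    (hvu : v ∈ bag u) : v ∈ bag t ∩ bag t' := by
  obtain ⟨z, hz, hvz⟩ := hv
  obtain ⟨q, hq⟩ := hconn v z u hvz hvu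
  obtain ⟨h1, h2⟩ := crossing_support q hz hu
  exact ⟨hq t h1, hq t' h2⟩

/-- The separation built from a family of out-neighbours of a node `c`. -/
lemma sep_of_N (G : SimpleGraph V) (hcover : ∀ v, ∃ t, v ∈ bag t)
    (hedge : ∀ u v, G.Adj u v → ∃ t, u ∈ bag t ∧ v ∈ bag t)
    (hconn : ∀ v t₁ t₂, v ∈ bag t₁ → v ∈ bag t₂ →
      ∃ p : tG.Walk t₁ t₂, ∀ s ∈ p.support, v ∈ bag s)
    (c : T) (N : Finset T) :
    ∃ B, IsSeparation G (⋃ s ∈ N, VS tG bag c s) B ∧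
      (⋃ s ∈ N, VS tG bag c s) ∩ B ⊆ ⋃ s ∈ N, (bag c ∩ bag s) := by
  classical
  refine ⟨{v | ∃ u, (∀ s ∈ N, u ∉ D tG c s) ∧ v ∈ bag u}, ⟨?_, ?_⟩, ?_⟩
  · apply Set.eq_univ_of_forall
    intro v
    rw [Set.mem_union]
    obtain ⟨u, hu⟩ := hcover v
    by_cases hc : ∃ s ∈ N, u ∈ D tG c s
    · obtain ⟨s, hs, hus⟩ := hc
      exact Or.inl (Set.mem_biUnion hs ⟨u, hus, hu⟩)
    · push_neg at hc
      exact Or.inr ⟨u, hc, hu⟩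
  · rintro u v huv ⟨⟨huA, huB⟩, hvB, hvA⟩
    obtain ⟨z, hzu, hzv⟩ := hedge u v huv
    by_cases hz : ∃ s ∈ N, z ∈ D tG c s
    · obtain ⟨s, hs, hzs⟩ := hz
      exact hvA (Set.mem_biUnion hs ⟨z, hzs, hzv⟩)
    · push_neg at hz
      exact huB ⟨z, hz, hzu⟩
  · rintro v ⟨hvA, u, hu, hvu⟩
    obtain ⟨s, hs, hvs⟩ := Set.mem_iUnion₂.mp hvA
    exact Set.mem_biUnion hs (mem_adh hconn hvs (hu s hs) hvu)

lemma exists_D (htree : tG.IsTree) {r u : T} (hu : u ≠ r) :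
    ∃ s, tG.Adj r s ∧ u ∈ D tG r s := by
  classical
  obtain ⟨w⟩ := htree.isConnected.preconnected r u
  obtain ⟨q, hq⟩ : ∃ q : tG.Walk r u, q.IsPath := ⟨w.toPath.1, w.toPath.2⟩
  cases q with
  | nil => exact absurd rfl hu
  | @cons _ s _ h q =>
    rw [Walk.cons_isPath_iff] at hq
    have he : ∀ e ∈ q.edges, e ∉ ({s(r, s)} : Set (Sym2 T)) := by
      intro e hew hmem
      rw [Set.mem_singleton_iff] at hmem
      subst hmem
      exact hq.2 (q.fst_mem_support_of_mem_edges hew)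
    exact ⟨s, h, ⟨q.toDeleteEdges _ he⟩⟩

lemma not_mem_D' (hac : tG.IsAcyclic) {t t' : T} (h : tG.Adj t t') : t' ∉ D tG t' t := by
  have := not_mem_D hac h.symm
  exact this

lemma D_disjoint (hac : tG.IsAcyclic) {t t' x : T} (h : tG.Adj t t')
    (hx : x ∈ D tG t t') (hx' : x ∈ D tG t' t) : False := by
  have hx'' : (tG.deleteEdges {s(t, t')}).Reachable t x := by
    have : s(t', t) = s(t, t') := Sym2.eq_swap
    rw [D, Set.mem_setOf_eq, this] at hx'
    exact hx'
  exact not_mem_D hac h (hx.trans hx''.symm)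

lemma D_subset (hac : tG.IsAcyclic) {t t' s : T} (h : tG.Adj t t') (h' : tG.Adj t' s)
    (hs : s ≠ t) : D tG t' s ⊆ D tG t t' := by
  classical
  intro x hx
  obtain ⟨q⟩ := hx
  have hne : s(t, t') ∉ q.edges := by
    intro hmem
    have ht' : t' ∈ q.support := q.snd_mem_support_of_mem_edges hmem
    exact not_mem_D hac h' ⟨q.takeUntil t' ht'⟩
  have hedges : ∀ e ∈ q.edges, e ∈ (tG.deleteEdges {s(t, t')}).edgeSet := by
    intro e hew
    have h1 : e ∈ (tG.deleteEdges {s(t', s)}).edgeSet := q.edges_subset_edgeSet hew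
    rw [edgeSet_deleteEdges] at h1 ⊢
    refine ⟨h1.1, ?_⟩
    intro hmem
    rw [Set.mem_singleton_iff] at hmem
    exact hne (hmem ▸ hew)
  have hq' : (tG.deleteEdges {s(t, t')}).Reachable s x := ⟨q.transfer _ hedges⟩
  have hadj : (tG.deleteEdges {s(t, t')}).Adj t' s := by
    rw [deleteEdges_adj]
    refine ⟨h', ?_⟩
    intro hmem
    rw [Set.mem_singleton_iff, Sym2.eq_iff] at hmem
    rcases hmem with ⟨h1, h2⟩ | ⟨h1, h2⟩
    · exact h.ne h1.symm
    · exact hs h2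
  exact hadj.reachable.trans hq'

lemma VS_cover (htree : tG.IsTree) {t t' : T} (h : tG.Adj t t') :
    VS tG bag t t' ⊆ bag t' ∪ ⋃ s ∈ {s | tG.Adj t' s ∧ s ≠ t}, VS tG bag t' s := by
  rintro v ⟨u, huD, hvu⟩
  by_cases hut : u = t'
  · exact Or.inl (hut ▸ hvu)
  · obtain ⟨s, hadj, hus⟩ := exists_D htree hut
    have hst : s ≠ t := by
      rintro rfl
      exact D_disjoint htree.IsAcyclic h huD hus
    exact Or.inr (Set.mem_biUnion ⟨hadj, hst⟩ ⟨u, hus, hvu⟩)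


lemma ncard_biUnion_le {α : Type*} (F : Finset α) (f : α → Set V) :
    (⋃ x ∈ F, f x).ncard ≤ ∑ x ∈ F, (f x).ncard := by
  classical
  induction F using Finset.induction with
  | empty => simp
  | insert x F hx ih =>
    rw [Finset.sum_insert hx, Finset.set_biUnion_insert]
    exact (Set.ncard_union_le _ _).trans (Nat.add_le_add_left ih _)

lemma greedy {p : ℕ} {P : Finset T} {f : T → Set V}
    (hf : ∀ s ∈ P, (f s).ncard ≤ p) :
    ∀ N : Finset T, N ⊆ P → p < (⋃ s ∈ N, f s).ncard →
      ∃ N' : Finset T, N' ⊆ P ∧ N'.Nonempty ∧ p < (⋃ s ∈ N', f s).ncard ∧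
        (⋃ s ∈ N', f s).ncard ≤ p + p := by
  classical
  intro N
  induction N using Finset.strongInduction with
  | _ N ih =>
    intro hNP hbig
    have hNne : N.Nonempty := by
      rcases N.eq_empty_or_nonempty with rfl | hne
      · simp at hbig
      · exact hne
    by_cases hle : (⋃ s ∈ N, f s).ncard ≤ p + p
    · exact ⟨N, hNP, hNne, hbig, hle⟩
    · push_neg at hle
      obtain ⟨x, hx⟩ := hNne
      have hsub : (⋃ s ∈ N, f s) ⊆ (⋃ s ∈ N.erase x, f s) ∪ f x := by
        intro v hv
        obtain ⟨s, hs, hvs⟩ := Set.mem_iUnion₂.mp hv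
        by_cases hsx : s = x
        · exact Or.inr (hsx ▸ hvs)
        · exact Or.inl (Set.mem_biUnion (Finset.mem_erase.mpr ⟨hsx, hs⟩) hvs)
      have hcard : (⋃ s ∈ N, f s).ncard ≤ (⋃ s ∈ N.erase x, f s).ncard + (f x).ncard :=
        (Set.ncard_le_ncard hsub (Set.toFinite _)).trans (Set.ncard_union_le _ _)
      have hbig' : p < (⋃ s ∈ N.erase x, f s).ncard := by
        have := hf x (hNP hx)
        omega
      exact ih (N.erase x) (Finset.erase_ssubset hx) ((N.erase_subset x).trans hNP) hbig'

lemma key (G : SimpleGraph V) {w h a p : ℕ}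
    (hcover : ∀ v, ∃ t, v ∈ bag t)
    (hedge : ∀ u v, G.Adj u v → ∃ t, u ∈ bag t ∧ v ∈ bag t)
    (hconn : ∀ v t₁ t₂, v ∈ bag t₁ → v ∈ bag t₂ →
      ∃ p : tG.Walk t₁ t₂, ∀ s ∈ p.support, v ∈ bag s)
    (hwidth : ∀ t, (bag t).ncard ≤ w)
    (hadh : ∀ t t', tG.Adj t t' → (bag t ∩ bag t').ncard ≤ h)
    (hadeg : ∀ t, {S : Set V | ∃ t', tG.Adj t t' ∧ S = bag t ∩ bag t'}.ncard ≤ a)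
    (ha : 2 ≤ a)
    (c : T) (P : Finset T) (hPadj : ∀ s ∈ P, tG.Adj c s)
    (hPsmall : ∀ s ∈ P, (VS tG bag c s).ncard ≤ p)
    (X : Set V) (hX : X ⊆ bag c ∪ ⋃ s ∈ P, VS tG bag c s) (hpX : p < X.ncard)
    (hfb : X.ncard ≤ w + p * a →
      ∃ A B : Set V, IsSeparation G A B ∧ (A ∩ B).ncard ≤ h ∧
        p < A.ncard ∧ A.ncard ≤ w + p * a) :
    ∃ A B : Set V, IsSeparation G A B ∧ (A ∩ B).ncard ≤ h ∧
      p < A.ncard ∧ A.ncard ≤ w + p * a := by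
  classical
  set 𝒮 : Finset (Set V) := P.image (fun s => bag c ∩ bag s) with h𝒮
  by_cases hcase : ∀ S ∈ 𝒮,
      (⋃ s ∈ P.filter (fun s => bag c ∩ bag s = S), VS tG bag c s).ncard ≤ p
  · apply hfb
    have hXsub : X ⊆ bag c ∪
        ⋃ S ∈ 𝒮, ⋃ s ∈ P.filter (fun s => bag c ∩ bag s = S), VS tG bag c s := by
      intro v hv
      rcases hX hv with hv1 | hv2
      · exact Or.inl hv1
      · obtain ⟨s, hs, hvs⟩ := Set.mem_iUnion₂.mp hv2
        refine Or.inr (Set.mem_biUnion (Finset.mem_image_of_mem _ hs) ?_)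
        exact Set.mem_biUnion (Finset.mem_filter.mpr ⟨hs, rfl⟩) hvs
    have hcard𝒮 : 𝒮.card ≤ a := by
      have hsub : (𝒮 : Set (Set V)) ⊆ {S : Set V | ∃ t', tG.Adj c t' ∧ S = bag c ∩ bag t'} := by
        intro S hS
        obtain ⟨s, hs, rfl⟩ := Finset.mem_image.mp hS
        exact ⟨s, hPadj s hs, rfl⟩
      calc 𝒮.card = (𝒮 : Set (Set V)).ncard := (Set.ncard_coe_finset _).symm
        _ ≤ _ := Set.ncard_le_ncard hsub (Set.toFinite _)
        _ ≤ a := hadeg c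
    calc X.ncard ≤ _ := Set.ncard_le_ncard hXsub (Set.toFinite _)
      _ ≤ (bag c).ncard + (⋃ S ∈ 𝒮, ⋃ s ∈ P.filter (fun s => bag c ∩ bag s = S),
            VS tG bag c s).ncard := Set.ncard_union_le _ _
      _ ≤ (bag c).ncard + ∑ S ∈ 𝒮, (⋃ s ∈ P.filter (fun s => bag c ∩ bag s = S),
            VS tG bag c s).ncard := Nat.add_le_add_left (ncard_biUnion_le _ _) _
      _ ≤ w + 𝒮.card * p := by
          refine Nat.add_le_add (hwidth c) ?_
          calc ∑ S ∈ 𝒮, _ ≤ 𝒮.card • p := Finset.sum_le_card_nsmul _ _ _ hcase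
            _ = 𝒮.card * p := by rw [smul_eq_mul]
      _ ≤ w + p * a := by
          refine Nat.add_le_add_left ?_ _
          calc 𝒮.card * p ≤ a * p := Nat.mul_le_mul_right _ hcard𝒮
            _ = p * a := Nat.mul_comm _ _
  · push_neg at hcase
    obtain ⟨S, hS𝒮, hSbig⟩ := hcase
    obtain ⟨N, hNQ, hNne, hNbig, hNle⟩ :=
      greedy (P := P.filter (fun s => bag c ∩ bag s = S)) (f := fun s => VS tG bag c s)
        (fun s hs => hPsmall s (Finset.mem_filter.mp hs).1) _ subset_rfl hSbig
    obtain ⟨B, hsep, hinter⟩ := sep_of_N G hcover hedge hconn c N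
    refine ⟨_, B, hsep, ?_, hNbig, ?_⟩
    · obtain ⟨s₀, hs₀⟩ := hNne
      have hs₀P := Finset.mem_filter.mp (hNQ hs₀)
      have hsub : (⋃ s ∈ N, (bag c ∩ bag s)) ⊆ bag c ∩ bag s₀ := by
        intro v hv
        obtain ⟨s, hs, hvs⟩ := Set.mem_iUnion₂.mp hv
        have h1 := (Finset.mem_filter.mp (hNQ hs)).2
        rw [h1, ← hs₀P.2] at hvs
        exact hvs
      calc _ ≤ (bag c ∩ bag s₀).ncard :=
            Set.ncard_le_ncard (hinter.trans hsub) (Set.toFinite _)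
        _ ≤ h := hadh c s₀ (hPadj s₀ hs₀P.1)
    · calc _ ≤ p + p := hNle
        _ ≤ p * a := by
            have := Nat.mul_le_mul (le_refl p) ha
            omega
        _ ≤ w + p * a := Nat.le_add_left _ _

end TDSep

/-- From a tree decomposition of width less than `w`, adhesion at most `h`, and adhesion degree
at most `a ≥ 2`, one obtains for every `p < |V(G)|` a separation `(A,B)` of order at most `h`
with `p < |A| ≤ w + p·a`. -/
theorem decomp_gives_separation {V T : Type*} [Fintype V] [Fintype T]
    (G : SimpleGraph V) (tG : SimpleGraph T) (bag : T → Set V) (w h a p : ℕ)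
    (hdecomp : IsTreeDecomp G tG bag)
    (hwidth : ∀ t, (bag t).ncard ≤ w)
    (hadh : ∀ t t', tG.Adj t t' → (bag t ∩ bag t').ncard ≤ h)
    (hadeg : ∀ t, {S : Set V | ∃ t', tG.Adj t t' ∧ S = bag t ∩ bag t'}.ncard ≤ a)
    (ha : 2 ≤ a) (hp : p < Fintype.card V) :
    ∃ A B : Set V, IsSeparation G A B ∧ (A ∩ B).ncard ≤ h ∧
      p < A.ncard ∧ A.ncard ≤ w + p * a := by
  classical
  obtain ⟨htree, hcover, hedge, hconn⟩ := hdecomp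
  by_cases hE : ∃ x y, tG.Adj x y ∧ p < (TDSep.VS tG bag x y).ncard
  · set M : Set ℕ := {n | ∃ x y, tG.Adj x y ∧ p < (TDSep.VS tG bag x y).ncard ∧
      (TDSep.D tG x y).ncard = n} with hM
    have hne : M.Nonempty := by
      obtain ⟨x, y, h1, h2⟩ := hE
      exact ⟨_, x, y, h1, h2, rfl⟩
    obtain ⟨t, t', hadj, hbig, hmin⟩ := Nat.sInf_mem hne
    have hsmall : ∀ s, tG.Adj t' s → s ≠ t → (TDSep.VS tG bag t' s).ncard ≤ p := by
      intro s hadj' hst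
      by_contra hgt
      push_neg at hgt
      have hlt : (TDSep.D tG t' s).ncard < (TDSep.D tG t t').ncard := by
        refine Set.ncard_lt_ncard ⟨TDSep.D_subset htree.IsAcyclic hadj hadj' hst, ?_⟩
          (Set.toFinite _)
        intro hsub
        exact TDSep.not_mem_D htree.IsAcyclic hadj' (hsub (TDSep.mem_D_self t t'))
      have hle := Nat.sInf_le (show (TDSep.D tG t' s).ncard ∈ M from ⟨t', s, hadj', hgt, rfl⟩)
      omega
    apply TDSep.key G hcover hedge hconn hwidth hadh hadeg ha t'
        (Finset.univ.filter (fun s => tG.Adj t' s ∧ s ≠ t)) ?_ ?_ (TDSep.VS tG bag t t') ?_ hbig ?_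
    · intro s hs
      exact ((Finset.mem_filter.mp hs).2).1
    · intro s hs
      obtain ⟨h1, h2⟩ := (Finset.mem_filter.mp hs).2
      exact hsmall s h1 h2
    · intro v hv
      rcases TDSep.VS_cover htree hadj hv with h1 | h2
      · exact Or.inl h1
      · obtain ⟨s, hs, hvs⟩ := Set.mem_iUnion₂.mp h2
        exact Or.inr (Set.mem_biUnion (Finset.mem_filter.mpr ⟨Finset.mem_univ _, hs⟩) hvs)
    · intro hle
      obtain ⟨B, hsep, hinter⟩ := TDSep.sep_of_N G hcover hedge hconn t {t'}
      have hA : (⋃ s ∈ ({t'} : Finset T), TDSep.VS tG bag t s) = TDSep.VS tG bag t t' := by simp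
      have hI : (⋃ s ∈ ({t'} : Finset T), (bag t ∩ bag s)) = bag t ∩ bag t' := by simp
      rw [hA] at hsep hinter
      rw [hI] at hinter
      refine ⟨_, B, hsep, ?_, hbig, hle⟩
      calc _ ≤ (bag t ∩ bag t').ncard := Set.ncard_le_ncard hinter (Set.toFinite _)
        _ ≤ h := hadh t t' hadj
  · push_neg at hE
    have hV : Nonempty V := Fintype.card_pos_iff.mp (lt_of_le_of_lt (Nat.zero_le _) hp)
    obtain ⟨v₀⟩ := hV
    obtain ⟨r, _⟩ := hcover v₀
    apply TDSep.key G hcover hedge hconn hwidth hadh hadeg ha r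
        (Finset.univ.filter (fun s => tG.Adj r s)) ?_ ?_ Set.univ ?_ ?_ ?_
    · intro s hs
      exact (Finset.mem_filter.mp hs).2
    · intro s hs
      exact hE r s (Finset.mem_filter.mp hs).2
    · intro v _
      obtain ⟨u, hu⟩ := hcover v
      by_cases hur : u = r
      · exact Or.inl (hur ▸ hu)
      · obtain ⟨s, hadj, hus⟩ := TDSep.exists_D htree hur
        exact Or.inr (Set.mem_biUnion (Finset.mem_filter.mpr ⟨Finset.mem_univ _, hadj⟩)
          ⟨u, hus, hu⟩)
    · rw [Set.ncard_univ, Nat.card_eq_fintype_card]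
      exact hp
    · intro hle
      refine ⟨Set.univ, ∅, ⟨by simp, ?_⟩, ?_, ?_, ?_⟩
      · rintro u v huv ⟨_, ⟨hv, _⟩⟩
        exact absurd hv (Set.notMem_empty v)
      · simp
      · rw [Set.ncard_univ, Nat.card_eq_fintype_card]
        exact hp
      · rw [Set.ncard_univ, Nat.card_eq_fintype_card] at hle ⊢
        exact hle
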